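/- The metric g = -dt² + dr² + (1 - (t²+r²)/α²)² dz² + r² dφ² has Einstein tensor of dust form: G_{ab} = ρ u_a u_b with u = ∂_t and ρ = 4/(α²(1 - (t²+r²)/α²)), on the region t² + r² < α². -/

import Mathlib

noncomputable section

namespace SzekeresDust

/-- Points of the spacetime, in coordinates `x = (t, r, φ, z)`. -/
abbrev Pt := Fin 4 → ℝ

/-- Metric: a matrix-valued function of the point. -/
abbrev Metric := Pt → Matrix (Fin 4) (Fin 4) ℝ

/-- Partial derivative `∂ᵢ f` of a scalar function. -/
def pd (i : Fin 4) (f : Pt → ℝ) (x : Pt) : ℝ := fderiv ℝ f x (Pi.single i 1)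

/-- Inverse metric `g^{ab}`. -/
def ginv (g : Metric) (x : Pt) : Matrix (Fin 4) (Fin 4) ℝ := (g x)⁻¹

/-- Christoffel symbols `Γ^a_{bc}` of the Levi-Civita connection of `g`. -/
def christoffel (g : Metric) (x : Pt) (a b c : Fin 4) : ℝ :=
  (1 / 2) * ∑ d, ginv g x a d *
    (pd b (fun y => g y d c) x + pd c (fun y => g y d b) x - pd d (fun y => g y b c) x)

/-- Riemann curvature tensor `R^a_{bcd}`. -/
def riemann (g : Metric) (x : Pt) (a b c d : Fin 4) : ℝ :=
  pd c (fun y => christoffel g y a d b) x - pd d (fun y => christoffel g y a c b) x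
    + ∑ e, (christoffel g x a c e * christoffel g x e d b
      - christoffel g x a d e * christoffel g x e c b)

/-- Ricci tensor `R_{bd} = R^a_{bad}`. -/
def ricci (g : Metric) (x : Pt) (b d : Fin 4) : ℝ := ∑ a, riemann g x a b a d

/-- Scalar curvature `R = g^{bd} R_{bd}`. -/
def scalarCurv (g : Metric) (x : Pt) : ℝ := ∑ b, ∑ d, ginv g x b d * ricci g x b d

/-- Einstein tensor `G_{ab} = R_{ab} - (1/2) R g_{ab}`. -/
def einstein (g : Metric) (x : Pt) : Matrix (Fin 4) (Fin 4) ℝ :=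
  Matrix.of fun a b => ricci g x a b - (1 / 2) * scalarCurv g x * g x a b

/-- The inhomogeneous Szekeres dust metric
`g = -dt² + dr² + (1 - (t²+r²)/α²)² dz² + r² dφ²`, in coordinates
`(t, r, φ, z)`. -/
def gSzekeres (α : ℝ) : Metric := fun x =>
  Matrix.diagonal ![-1, 1, (x 1) ^ 2, (1 - ((x 0) ^ 2 + (x 1) ^ 2) / α ^ 2) ^ 2]

/-- The unit timelike covector `u_a` corresponding to `u = ∂_t`. -/
def uCov : Fin 4 → ℝ := ![-1, 0, 0, 0]

/-! ### Auxiliary machinery -/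

/-- The profile function `F = 1 - (t² + r²)/α²`. -/
def Fz (α : ℝ) (y : Pt) : ℝ := 1 - ((y 0) ^ 2 + (y 1) ^ 2) / α ^ 2

/-- The coordinate domain. -/
def U (α : ℝ) : Set Pt := {y | (y 0) ^ 2 + (y 1) ^ 2 < α ^ 2 ∧ 0 < y 1}

theorem isOpen_U (α : ℝ) : IsOpen (U α) := by
  have h1 : IsOpen {y : Pt | (y 0) ^ 2 + (y 1) ^ 2 < α ^ 2} :=
    isOpen_lt (by fun_prop) continuous_const
  have h2 : IsOpen {y : Pt | 0 < y 1} := isOpen_lt continuous_const (by fun_prop)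
  exact h1.inter h2

theorem Fz_pos {α : ℝ} (hα : α ≠ 0) {x : Pt} (hx : x ∈ U α) : 0 < Fz α x := by
  have h2 : (0:ℝ) < α ^ 2 := by positivity
  have := hx.1
  have : ((x 0) ^ 2 + (x 1) ^ 2) / α ^ 2 < 1 := (div_lt_one h2).2 this
  unfold Fz; linarith

theorem pd_eq {f : Pt → ℝ} {x : Pt} {i : Fin 4} {v : ℝ}
    (hf : DifferentiableAt ℝ f x)
    (h : HasDerivAt (fun s => f (Function.update x i s)) v (x i)) :
    pd i f x = v := by
  have key : HasFDerivAt f (fderiv ℝ f x) (Function.update x i (x i)) := by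
    rw [Function.update_eq_self]; exact hf.hasFDerivAt
  exact (key.comp_hasDerivAt (x i) (hasDerivAt_update x i (x i))).unique h

theorem pd_const (c : ℝ) (x : Pt) (i : Fin 4) : pd i (fun _ => c) x = 0 :=
  pd_eq (differentiableAt_const c) (hasDerivAt_const _ c)

theorem pd_congr {f h : Pt → ℝ} {x : Pt} (hx : f =ᶠ[nhds x] h) (i : Fin 4) :
    pd i f x = pd i h x := by unfold pd; rw [hx.fderiv_eq]

theorem diffAt_coord (i : Fin 4) (x : Pt) : DifferentiableAt ℝ (fun y : Pt => y i) x :=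
  (hasFDerivAt_apply i x).differentiableAt

/-- Master lemma: partial derivatives of a function depending only on `y 0`, `y 1`. -/
theorem pd_P (P : ℝ → ℝ → ℝ) (x : Pt) {v0 v1 : ℝ}
    (hd : DifferentiableAt ℝ (fun y : Pt => P (y 0) (y 1)) x)
    (h0 : HasDerivAt (fun s => P s (x 1)) v0 (x 0))
    (h1 : HasDerivAt (fun s => P (x 0) s) v1 (x 1))
    (i : Fin 4) : pd i (fun y : Pt => P (y 0) (y 1)) x = ![v0, v1, 0, 0] i := by
  have e01 : (1 : Fin 4) ≠ 0 := by decide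
  have e10 : (0 : Fin 4) ≠ 1 := by decide
  have e02 : (0 : Fin 4) ≠ 2 := by decide
  have e12 : (1 : Fin 4) ≠ 2 := by decide
  have e03 : (0 : Fin 4) ≠ 3 := by decide
  have e13 : (1 : Fin 4) ≠ 3 := by decide
  fin_cases i
  · show pd 0 (fun y : Pt => P (y 0) (y 1)) x = v0
    refine pd_eq hd ?_
    have hc : (fun s : ℝ => P (Function.update x 0 s 0) (Function.update x 0 s 1))
        = fun s => P s (x 1) := by
      funext s; rw [Function.update_self, Function.update_of_ne e01]
    rw [hc]; exact h0
  · show pd 1 (fun y : Pt => P (y 0) (y 1)) x = v1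
    refine pd_eq hd ?_
    have hc : (fun s : ℝ => P (Function.update x 1 s 0) (Function.update x 1 s 1))
        = fun s => P (x 0) s := by
      funext s; rw [Function.update_self, Function.update_of_ne e10]
    rw [hc]; exact h1
  · show pd 2 (fun y : Pt => P (y 0) (y 1)) x = 0
    refine pd_eq hd ?_
    have hc : (fun s : ℝ => P (Function.update x 2 s 0) (Function.update x 2 s 1))
        = fun _ => P (x 0) (x 1) := by
      funext s; rw [Function.update_of_ne e02, Function.update_of_ne e12]
    rw [hc]; exact hasDerivAt_const _ _
  · show pd 3 (fun y : Pt => P (y 0) (y 1)) x = 0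
    refine pd_eq hd ?_
    have hc : (fun s : ℝ => P (Function.update x 3 s 0) (Function.update x 3 s 1))
        = fun _ => P (x 0) (x 1) := by
      funext s; rw [Function.update_of_ne e03, Function.update_of_ne e13]
    rw [hc]; exact hasDerivAt_const _ _

/-! ### Differentiability helpers -/

theorem diffAt_sum2 (x : Pt) :
    DifferentiableAt ℝ (fun y : Pt => (y 0) ^ 2 + (y 1) ^ 2) x :=
  ((diffAt_coord 0 x).pow 2).add ((diffAt_coord 1 x).pow 2)

theorem diffAt_Fz (α : ℝ) (x : Pt) : DifferentiableAt ℝ (fun y : Pt => Fz α y) x := by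
  have h : (fun y : Pt => Fz α y)
      = fun y : Pt => 1 - ((y 0) ^ 2 + (y 1) ^ 2) * (α ^ 2)⁻¹ := by
    funext y; unfold Fz; ring
  rw [h]
  exact (differentiableAt_const 1).sub ((diffAt_sum2 x).mul_const _)

/-! ### Base partial-derivative computations -/

theorem pd_f22 (x : Pt) (i : Fin 4) :
    pd i (fun y : Pt => (y 1) ^ 2) x = ![0, 2 * x 1, 0, 0] i := by
  refine pd_P (fun _ r => r ^ 2) x ?_ ?_ ?_ i
  · exact (diffAt_coord 1 x).pow 2
  · exact hasDerivAt_const _ _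
  · simpa using hasDerivAt_pow 2 (x 1)

theorem pd_f33 (α : ℝ) (hα : α ≠ 0) (x : Pt) (i : Fin 4) :
    pd i (fun y : Pt => (1 - ((y 0) ^ 2 + (y 1) ^ 2) / α ^ 2) ^ 2) x
      = ![-4 * x 0 * Fz α x / α ^ 2, -4 * x 1 * Fz α x / α ^ 2, 0, 0] i := by
  have ha2 : (α:ℝ) ^ 2 ≠ 0 := pow_ne_zero 2 hα
  refine pd_P (fun t r => (1 - (t ^ 2 + r ^ 2) / α ^ 2) ^ 2) x ?_ ?_ ?_ i
  · exact ((diffAt_Fz α x).pow 2 : _)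
  · have h := ((((hasDerivAt_pow 2 (x 0)).add_const ((x 1) ^ 2)).div_const (α ^ 2)).const_sub 1).pow 2
    refine h.congr_deriv ?_
    unfold Fz; norm_num; field_simp; ring
  · have h := ((((hasDerivAt_pow 2 (x 1)).const_add ((x 0) ^ 2)).div_const (α ^ 2)).const_sub 1).pow 2
    refine h.congr_deriv ?_
    unfold Fz; norm_num; field_simp; ring

theorem pd_c1 (α : ℝ) (hα : α ≠ 0) (x : Pt) (i : Fin 4) :
    pd i (fun y : Pt => -2 * y 0 * Fz α y / α ^ 2) x
      = ![-2 * Fz α x / α ^ 2 + 4 * (x 0) ^ 2 / α ^ 4, 4 * x 0 * x 1 / α ^ 4, 0, 0] i := by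
  have ha2 : (α:ℝ) ^ 2 ≠ 0 := pow_ne_zero 2 hα
  refine pd_P (fun t r => -2 * t * (1 - (t ^ 2 + r ^ 2) / α ^ 2) / α ^ 2) x ?_ ?_ ?_ i
  · show DifferentiableAt ℝ
      (fun y : Pt => -2 * y 0 * (1 - ((y 0) ^ 2 + (y 1) ^ 2) / α ^ 2) / α ^ 2) x
    have heq : (fun y : Pt => -2 * y 0 * (1 - ((y 0) ^ 2 + (y 1) ^ 2) / α ^ 2) / α ^ 2)
        = fun y : Pt => (-2 * y 0 * Fz α y) * (α ^ 2)⁻¹ := by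
      funext y; unfold Fz; rw [div_eq_mul_inv]
    rw [heq]
    exact (((diffAt_coord 0 x).const_mul (-2)).mul (diffAt_Fz α x)).mul_const _
  · have h := ((((hasDerivAt_id (x 0)).const_mul (-2)).mul
      ((((hasDerivAt_pow 2 (x 0)).add_const ((x 1) ^ 2)).div_const (α ^ 2)).const_sub 1)).div_const (α ^ 2))
    refine h.congr_deriv ?_
    simp only [id]
    unfold Fz; field_simp; ring
  · have h := (((hasDerivAt_const (x 1) (-2 * x 0)).mul
      ((((hasDerivAt_pow 2 (x 1)).const_add ((x 0) ^ 2)).div_const (α ^ 2)).const_sub 1)).div_const (α ^ 2))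
    refine h.congr_deriv ?_
    field_simp; ring

theorem pd_c2 (α : ℝ) (hα : α ≠ 0) (x : Pt) (i : Fin 4) :
    pd i (fun y : Pt => 2 * y 1 * Fz α y / α ^ 2) x
      = ![-4 * x 0 * x 1 / α ^ 4, 2 * Fz α x / α ^ 2 - 4 * (x 1) ^ 2 / α ^ 4, 0, 0] i := by
  have ha2 : (α:ℝ) ^ 2 ≠ 0 := pow_ne_zero 2 hα
  refine pd_P (fun t r => 2 * r * (1 - (t ^ 2 + r ^ 2) / α ^ 2) / α ^ 2) x ?_ ?_ ?_ i
  · show DifferentiableAt ℝ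
      (fun y : Pt => 2 * y 1 * (1 - ((y 0) ^ 2 + (y 1) ^ 2) / α ^ 2) / α ^ 2) x
    have heq : (fun y : Pt => 2 * y 1 * (1 - ((y 0) ^ 2 + (y 1) ^ 2) / α ^ 2) / α ^ 2)
        = fun y : Pt => (2 * y 1 * Fz α y) * (α ^ 2)⁻¹ := by
      funext y; unfold Fz; rw [div_eq_mul_inv]
    rw [heq]
    exact (((diffAt_coord 1 x).const_mul (2:ℝ)).mul (diffAt_Fz α x)).mul_const _
  · have h := (((hasDerivAt_const (x 0) (2 * x 1)).mul
      ((((hasDerivAt_pow 2 (x 0)).add_const ((x 1) ^ 2)).div_const (α ^ 2)).const_sub 1)).div_const (α ^ 2))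
    refine h.congr_deriv ?_
    field_simp; ring
  · have h := ((((hasDerivAt_id (x 1)).const_mul (2:ℝ)).mul
      ((((hasDerivAt_pow 2 (x 1)).const_add ((x 0) ^ 2)).div_const (α ^ 2)).const_sub 1)).div_const (α ^ 2))
    refine h.congr_deriv ?_
    simp only [id]
    unfold Fz; field_simp; ring

theorem pd_c3 (x : Pt) (i : Fin 4) :
    pd i (fun y : Pt => -(y 1)) x = ![0, -1, 0, 0] i := by
  refine pd_P (fun _ r => -r) x ?_ ?_ ?_ i
  · exact (diffAt_coord 1 x).neg
  · exact hasDerivAt_const _ _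
  · exact hasDerivAt_neg (x 1)

theorem pd_c4 (x : Pt) (hr : x 1 ≠ 0) (i : Fin 4) :
    pd i (fun y : Pt => (y 1)⁻¹) x = ![0, -((x 1) ^ 2)⁻¹, 0, 0] i := by
  refine pd_P (fun _ r => r⁻¹) x ?_ ?_ ?_ i
  · exact (diffAt_coord 1 x).inv hr
  · exact hasDerivAt_const _ _
  · have h := (hasDerivAt_id (x 1)).inv hr
    refine h.congr_deriv ?_
    simp only [id]
    field_simp

theorem pd_c5 (α : ℝ) (hα : α ≠ 0) (x : Pt) (hF : Fz α x ≠ 0) (i : Fin 4) :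
    pd i (fun y : Pt => -2 * y 0 / (α ^ 2 * Fz α y)) x
      = ![-2 / (α ^ 2 * Fz α x) - 4 * (x 0) ^ 2 / (α ^ 4 * (Fz α x) ^ 2),
          -4 * x 0 * x 1 / (α ^ 4 * (Fz α x) ^ 2), 0, 0] i := by
  have ha2 : (α:ℝ) ^ 2 ≠ 0 := pow_ne_zero 2 hα
  have hden : α ^ 2 * Fz α x ≠ 0 := mul_ne_zero ha2 hF
  have hFalt : Fz α x = (α ^ 2 - (x 0) ^ 2 - (x 1) ^ 2) / α ^ 2 := by
    unfold Fz; field_simp; ring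
  have hq : (1 - ((x 0) ^ 2 + (x 1) ^ 2) / α ^ 2) = (α ^ 2 - (x 0) ^ 2 - (x 1) ^ 2) / α ^ 2 := by
    field_simp; ring
  have hA : α ^ 2 - (x 0) ^ 2 - (x 1) ^ 2 ≠ 0 := fun h => hF (by rw [hFalt, h, zero_div])
  refine pd_P (fun t r => -2 * t / (α ^ 2 * (1 - (t ^ 2 + r ^ 2) / α ^ 2))) x ?_ ?_ ?_ i
  · show DifferentiableAt ℝ
      (fun y : Pt => -2 * y 0 / (α ^ 2 * (1 - ((y 0) ^ 2 + (y 1) ^ 2) / α ^ 2))) x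
    have hd : DifferentiableAt ℝ (fun y : Pt => α ^ 2 * Fz α y) x :=
      (diffAt_Fz α x).const_mul _
    have heq : (fun y : Pt => -2 * y 0 / (α ^ 2 * (1 - ((y 0) ^ 2 + (y 1) ^ 2) / α ^ 2)))
        = fun y : Pt => -2 * y 0 * (α ^ 2 * Fz α y)⁻¹ := by
      funext y; unfold Fz; rw [div_eq_mul_inv]
    rw [heq]
    exact ((diffAt_coord 0 x).const_mul (-2)).mul (hd.inv hden)
  · have hden0 : α ^ 2 * (1 - ((x 0) ^ 2 + (x 1) ^ 2) / α ^ 2) ≠ 0 := hden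
    have h := (((hasDerivAt_id (x 0)).const_mul (-2)).div
      (((((hasDerivAt_pow 2 (x 0)).add_const ((x 1) ^ 2)).div_const (α ^ 2)).const_sub 1).const_mul (α ^ 2)) hden0)
    refine h.congr_deriv ?_
    simp only [id]
    rw [hFalt, hq]
    field_simp [hA]
    ring
  · have hden0 : α ^ 2 * (1 - ((x 0) ^ 2 + (x 1) ^ 2) / α ^ 2) ≠ 0 := hden
    have h := ((hasDerivAt_const (x 1) (-2 * x 0)).div
      (((((hasDerivAt_pow 2 (x 1)).const_add ((x 0) ^ 2)).div_const (α ^ 2)).const_sub 1).const_mul (α ^ 2)) hden0)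
    refine h.congr_deriv ?_
    rw [hFalt, hq]
    field_simp [hA]
    ring

theorem pd_c6 (α : ℝ) (hα : α ≠ 0) (x : Pt) (hF : Fz α x ≠ 0) (i : Fin 4) :
    pd i (fun y : Pt => -2 * y 1 / (α ^ 2 * Fz α y)) x
      = ![-4 * x 0 * x 1 / (α ^ 4 * (Fz α x) ^ 2),
          -2 / (α ^ 2 * Fz α x) - 4 * (x 1) ^ 2 / (α ^ 4 * (Fz α x) ^ 2), 0, 0] i := by
  have ha2 : (α:ℝ) ^ 2 ≠ 0 := pow_ne_zero 2 hα
  have hden : α ^ 2 * Fz α x ≠ 0 := mul_ne_zero ha2 hF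
  have hFalt : Fz α x = (α ^ 2 - (x 0) ^ 2 - (x 1) ^ 2) / α ^ 2 := by
    unfold Fz; field_simp; ring
  have hq : (1 - ((x 0) ^ 2 + (x 1) ^ 2) / α ^ 2) = (α ^ 2 - (x 0) ^ 2 - (x 1) ^ 2) / α ^ 2 := by
    field_simp; ring
  have hA : α ^ 2 - (x 0) ^ 2 - (x 1) ^ 2 ≠ 0 := fun h => hF (by rw [hFalt, h, zero_div])
  refine pd_P (fun t r => -2 * r / (α ^ 2 * (1 - (t ^ 2 + r ^ 2) / α ^ 2))) x ?_ ?_ ?_ i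
  · show DifferentiableAt ℝ
      (fun y : Pt => -2 * y 1 / (α ^ 2 * (1 - ((y 0) ^ 2 + (y 1) ^ 2) / α ^ 2))) x
    have hd : DifferentiableAt ℝ (fun y : Pt => α ^ 2 * Fz α y) x :=
      (diffAt_Fz α x).const_mul _
    have heq : (fun y : Pt => -2 * y 1 / (α ^ 2 * (1 - ((y 0) ^ 2 + (y 1) ^ 2) / α ^ 2)))
        = fun y : Pt => -2 * y 1 * (α ^ 2 * Fz α y)⁻¹ := by
      funext y; unfold Fz; rw [div_eq_mul_inv]
    rw [heq]
    exact ((diffAt_coord 1 x).const_mul (-2)).mul (hd.inv hden)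
  · have hden0 : α ^ 2 * (1 - ((x 0) ^ 2 + (x 1) ^ 2) / α ^ 2) ≠ 0 := hden
    have h := ((hasDerivAt_const (x 0) (-2 * x 1)).div
      (((((hasDerivAt_pow 2 (x 0)).add_const ((x 1) ^ 2)).div_const (α ^ 2)).const_sub 1).const_mul (α ^ 2)) hden0)
    refine h.congr_deriv ?_
    rw [hFalt, hq]
    field_simp [hA]
    ring
  · have hden0 : α ^ 2 * (1 - ((x 0) ^ 2 + (x 1) ^ 2) / α ^ 2) ≠ 0 := hden
    have h := (((hasDerivAt_id (x 1)).const_mul (-2)).div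
      (((((hasDerivAt_pow 2 (x 1)).const_add ((x 0) ^ 2)).div_const (α ^ 2)).const_sub 1).const_mul (α ^ 2)) hden0)
    refine h.congr_deriv ?_
    simp only [id]
    rw [hFalt, hq]
    field_simp [hA]
    ring


/-! ### Inverse metric -/

theorem ginv_eq (α : ℝ) {x : Pt} (hr : x 1 ≠ 0) (hF : Fz α x ≠ 0) :
    ginv (gSzekeres α) x
      = Matrix.diagonal ![-1, 1, ((x 1) ^ 2)⁻¹, ((Fz α x) ^ 2)⁻¹] := by
  unfold ginv
  apply Matrix.inv_eq_right_inv
  rw [gSzekeres, Matrix.diagonal_mul_diagonal]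
  have : (fun j => ![-1, 1, (x 1) ^ 2, (1 - ((x 0) ^ 2 + (x 1) ^ 2) / α ^ 2) ^ 2] j *
      ![-1, 1, ((x 1) ^ 2)⁻¹, ((Fz α x) ^ 2)⁻¹] j) = fun _ => (1:ℝ) := by
    funext j
    fin_cases j
    · norm_num
    · norm_num
    · show (x 1) ^ 2 * ((x 1) ^ 2)⁻¹ = 1
      field_simp
    · show (1 - ((x 0) ^ 2 + (x 1) ^ 2) / α ^ 2) ^ 2 * ((Fz α x) ^ 2)⁻¹ = 1
      unfold Fz at hF ⊢
      field_simp
  rw [this, Matrix.diagonal_one]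

/-! ### Metric derivatives -/

/-- table of `∂ᵢ g_{dc}`. -/
def DG (α : ℝ) (x : Pt) (i d c : Fin 4) : ℝ :=
  if d = 2 ∧ c = 2 ∧ i = 1 then 2 * x 1
  else if d = 3 ∧ c = 3 ∧ i = 0 then -4 * x 0 * Fz α x / α ^ 2
  else if d = 3 ∧ c = 3 ∧ i = 1 then -4 * x 1 * Fz α x / α ^ 2
  else 0

theorem pd_g (α : ℝ) (hα : α ≠ 0) (x : Pt) (i d c : Fin 4) :
    pd i (fun y => gSzekeres α y d c) x = DG α x i d c := by
  have hconst : ∀ (r : ℝ), (∀ y : Pt, gSzekeres α y d c = r) →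
      pd i (fun y => gSzekeres α y d c) x = 0 := by
    intro r hr
    have : (fun y => gSzekeres α y d c) = fun _ => r := funext hr
    rw [this, pd_const]
  fin_cases d <;> fin_cases c
  · rw [hconst (-1) (fun y => by simp [gSzekeres])]; simp [DG]
  · rw [hconst 0 (fun y => by simp [gSzekeres, Matrix.diagonal_apply_ne])]; simp [DG]
  · rw [hconst 0 (fun y => by simp [gSzekeres, Matrix.diagonal_apply_ne])]; simp [DG]
  · rw [hconst 0 (fun y => by simp [gSzekeres, Matrix.diagonal_apply_ne])]; simp [DG]
  · rw [hconst 0 (fun y => by simp [gSzekeres, Matrix.diagonal_apply_ne])]; simp [DG]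
  · rw [hconst 1 (fun y => by simp [gSzekeres])]; simp [DG]
  · rw [hconst 0 (fun y => by simp [gSzekeres, Matrix.diagonal_apply_ne])]; simp [DG]
  · rw [hconst 0 (fun y => by simp [gSzekeres, Matrix.diagonal_apply_ne])]; simp [DG]
  · rw [hconst 0 (fun y => by simp [gSzekeres, Matrix.diagonal_apply_ne])]; simp [DG]
  · rw [hconst 0 (fun y => by simp [gSzekeres, Matrix.diagonal_apply_ne])]; simp [DG]
  · -- (2,2) : r²
    show pd i (fun y => gSzekeres α y 2 2) x = DG α x i 2 2
    have hfun : (fun y => gSzekeres α y 2 2) = fun y : Pt => (y 1) ^ 2 := by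
      funext y; simp [gSzekeres]
    rw [hfun, pd_f22]
    fin_cases i <;> simp [DG]
  · rw [hconst 0 (fun y => by simp [gSzekeres, Matrix.diagonal_apply_ne])]; simp [DG]
  · rw [hconst 0 (fun y => by simp [gSzekeres, Matrix.diagonal_apply_ne])]; simp [DG]
  · rw [hconst 0 (fun y => by simp [gSzekeres, Matrix.diagonal_apply_ne])]; simp [DG]
  · rw [hconst 0 (fun y => by simp [gSzekeres, Matrix.diagonal_apply_ne])]; simp [DG]
  · -- (3,3) : F²
    show pd i (fun y => gSzekeres α y 3 3) x = DG α x i 3 3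
    have hfun : (fun y => gSzekeres α y 3 3)
        = fun y : Pt => (1 - ((y 0) ^ 2 + (y 1) ^ 2) / α ^ 2) ^ 2 := by
      funext y; simp [gSzekeres]
    rw [hfun, pd_f33 α hα]
    fin_cases i <;> simp [DG]


/-! ### Christoffel symbols -/

theorem sum_diag_mul (v T : Fin 4 → ℝ) (a : Fin 4) :
    ∑ d, Matrix.diagonal v a d * T d = v a * T a := by
  rw [Finset.sum_eq_single a]
  · rw [Matrix.diagonal_apply_eq]
  · intro d _ hd
    rw [Matrix.diagonal_apply_ne _ (Ne.symm hd), zero_mul]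
  · intro h; exact absurd (Finset.mem_univ a) h

theorem christoffel_diag (α : ℝ) (hα : α ≠ 0) {x : Pt} (hr : x 1 ≠ 0) (hF : Fz α x ≠ 0)
    (a b c : Fin 4) :
    christoffel (gSzekeres α) x a b c
      = 1 / 2 * (![-1, 1, ((x 1) ^ 2)⁻¹, ((Fz α x) ^ 2)⁻¹] a
          * (DG α x b a c + DG α x c a b - DG α x a b c)) := by
  unfold christoffel
  rw [ginv_eq α hr hF]
  simp only [pd_g α hα]
  rw [sum_diag_mul _ (fun d => DG α x b d c + DG α x c d b - DG α x d b c)]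

/-- Explicit Christoffel symbols. -/
def Γexp (α : ℝ) (a b c : Fin 4) (y : Pt) : ℝ :=
  if a = 0 ∧ b = 3 ∧ c = 3 then -2 * y 0 * Fz α y / α ^ 2
  else if a = 1 ∧ b = 3 ∧ c = 3 then 2 * y 1 * Fz α y / α ^ 2
  else if a = 1 ∧ b = 2 ∧ c = 2 then -(y 1)
  else if a = 2 ∧ (b = 1 ∧ c = 2 ∨ b = 2 ∧ c = 1) then (y 1)⁻¹
  else if a = 3 ∧ (b = 0 ∧ c = 3 ∨ b = 3 ∧ c = 0) then -2 * y 0 / (α ^ 2 * Fz α y)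
  else if a = 3 ∧ (b = 1 ∧ c = 3 ∨ b = 3 ∧ c = 1) then -2 * y 1 / (α ^ 2 * Fz α y)
  else 0

set_option maxHeartbeats 1000000 in
theorem christoffel_eq (α : ℝ) (hα : α ≠ 0) {x : Pt} (hr : x 1 ≠ 0) (hF : Fz α x ≠ 0)
    (a b c : Fin 4) :
    christoffel (gSzekeres α) x a b c = Γexp α a b c x := by
  have ha2 : (α:ℝ) ^ 2 ≠ 0 := pow_ne_zero 2 hα
  rw [christoffel_diag α hα hr hF]
  fin_cases a <;> fin_cases b <;> fin_cases c <;>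
    · simp [DG, Γexp]
      try field_simp
      try ring

/-! ### Derivatives of Christoffel symbols -/

/-- table of `∂ᵢ Γ^a_{bc}`. -/
def DΓ (α : ℝ) (x : Pt) (i a b c : Fin 4) : ℝ :=
  if a = 0 ∧ b = 3 ∧ c = 3 then
    ![-2 * Fz α x / α ^ 2 + 4 * (x 0) ^ 2 / α ^ 4, 4 * x 0 * x 1 / α ^ 4, 0, 0] i
  else if a = 1 ∧ b = 3 ∧ c = 3 then
    ![-4 * x 0 * x 1 / α ^ 4, 2 * Fz α x / α ^ 2 - 4 * (x 1) ^ 2 / α ^ 4, 0, 0] i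
  else if a = 1 ∧ b = 2 ∧ c = 2 then ![0, -1, 0, 0] i
  else if a = 2 ∧ (b = 1 ∧ c = 2 ∨ b = 2 ∧ c = 1) then ![0, -((x 1) ^ 2)⁻¹, 0, 0] i
  else if a = 3 ∧ (b = 0 ∧ c = 3 ∨ b = 3 ∧ c = 0) then
    ![-2 / (α ^ 2 * Fz α x) - 4 * (x 0) ^ 2 / (α ^ 4 * (Fz α x) ^ 2),
      -4 * x 0 * x 1 / (α ^ 4 * (Fz α x) ^ 2), 0, 0] i
  else if a = 3 ∧ (b = 1 ∧ c = 3 ∨ b = 3 ∧ c = 1) then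
    ![-4 * x 0 * x 1 / (α ^ 4 * (Fz α x) ^ 2),
      -2 / (α ^ 2 * Fz α x) - 4 * (x 1) ^ 2 / (α ^ 4 * (Fz α x) ^ 2), 0, 0] i
  else 0

set_option maxHeartbeats 2000000 in
theorem pd_christoffel (α : ℝ) (hα : α ≠ 0) {x : Pt} (hx : x ∈ U α) (i a b c : Fin 4) :
    pd i (fun y => christoffel (gSzekeres α) y a b c) x = DΓ α x i a b c := by
  have hr : x 1 ≠ 0 := ne_of_gt hx.2
  have hF : Fz α x ≠ 0 := ne_of_gt (Fz_pos hα hx)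
  have hev : (fun y => christoffel (gSzekeres α) y a b c) =ᶠ[nhds x]
      (fun y => Γexp α a b c y) :=
    Filter.eventuallyEq_of_mem ((isOpen_U α).mem_nhds hx)
      (fun y hy => christoffel_eq α hα (ne_of_gt hy.2) (ne_of_gt (Fz_pos hα hy)) a b c)
  rw [pd_congr hev]
  fin_cases a <;> fin_cases b <;> fin_cases c
  · show pd i (fun y => Γexp α 0 0 0 y) x = DΓ α x i 0 0 0
    have hfun : (fun y => Γexp α 0 0 0 y) = fun _ : Pt => (0:ℝ) := by
      funext y; simp [Γexp]
    rw [hfun, pd_const]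
    simp [DΓ]
  · show pd i (fun y => Γexp α 0 0 1 y) x = DΓ α x i 0 0 1
    have hfun : (fun y => Γexp α 0 0 1 y) = fun _ : Pt => (0:ℝ) := by
      funext y; simp [Γexp]
    rw [hfun, pd_const]
    simp [DΓ]
  · show pd i (fun y => Γexp α 0 0 2 y) x = DΓ α x i 0 0 2
    have hfun : (fun y => Γexp α 0 0 2 y) = fun _ : Pt => (0:ℝ) := by
      funext y; simp [Γexp]
    rw [hfun, pd_const]
    simp [DΓ]
  · show pd i (fun y => Γexp α 0 0 3 y) x = DΓ α x i 0 0 3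
    have hfun : (fun y => Γexp α 0 0 3 y) = fun _ : Pt => (0:ℝ) := by
      funext y; simp [Γexp]
    rw [hfun, pd_const]
    simp [DΓ]
  · show pd i (fun y => Γexp α 0 1 0 y) x = DΓ α x i 0 1 0
    have hfun : (fun y => Γexp α 0 1 0 y) = fun _ : Pt => (0:ℝ) := by
      funext y; simp [Γexp]
    rw [hfun, pd_const]
    simp [DΓ]
  · show pd i (fun y => Γexp α 0 1 1 y) x = DΓ α x i 0 1 1
    have hfun : (fun y => Γexp α 0 1 1 y) = fun _ : Pt => (0:ℝ) := by
      funext y; simp [Γexp]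
    rw [hfun, pd_const]
    simp [DΓ]
  · show pd i (fun y => Γexp α 0 1 2 y) x = DΓ α x i 0 1 2
    have hfun : (fun y => Γexp α 0 1 2 y) = fun _ : Pt => (0:ℝ) := by
      funext y; simp [Γexp]
    rw [hfun, pd_const]
    simp [DΓ]
  · show pd i (fun y => Γexp α 0 1 3 y) x = DΓ α x i 0 1 3
    have hfun : (fun y => Γexp α 0 1 3 y) = fun _ : Pt => (0:ℝ) := by
      funext y; simp [Γexp]
    rw [hfun, pd_const]
    simp [DΓ]
  · show pd i (fun y => Γexp α 0 2 0 y) x = DΓ α x i 0 2 0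
    have hfun : (fun y => Γexp α 0 2 0 y) = fun _ : Pt => (0:ℝ) := by
      funext y; simp [Γexp]
    rw [hfun, pd_const]
    simp [DΓ]
  · show pd i (fun y => Γexp α 0 2 1 y) x = DΓ α x i 0 2 1
    have hfun : (fun y => Γexp α 0 2 1 y) = fun _ : Pt => (0:ℝ) := by
      funext y; simp [Γexp]
    rw [hfun, pd_const]
    simp [DΓ]
  · show pd i (fun y => Γexp α 0 2 2 y) x = DΓ α x i 0 2 2
    have hfun : (fun y => Γexp α 0 2 2 y) = fun _ : Pt => (0:ℝ) := by
      funext y; simp [Γexp]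
    rw [hfun, pd_const]
    simp [DΓ]
  · show pd i (fun y => Γexp α 0 2 3 y) x = DΓ α x i 0 2 3
    have hfun : (fun y => Γexp α 0 2 3 y) = fun _ : Pt => (0:ℝ) := by
      funext y; simp [Γexp]
    rw [hfun, pd_const]
    simp [DΓ]
  · show pd i (fun y => Γexp α 0 3 0 y) x = DΓ α x i 0 3 0
    have hfun : (fun y => Γexp α 0 3 0 y) = fun _ : Pt => (0:ℝ) := by
      funext y; simp [Γexp]
    rw [hfun, pd_const]
    simp [DΓ]
  · show pd i (fun y => Γexp α 0 3 1 y) x = DΓ α x i 0 3 1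
    have hfun : (fun y => Γexp α 0 3 1 y) = fun _ : Pt => (0:ℝ) := by
      funext y; simp [Γexp]
    rw [hfun, pd_const]
    simp [DΓ]
  · show pd i (fun y => Γexp α 0 3 2 y) x = DΓ α x i 0 3 2
    have hfun : (fun y => Γexp α 0 3 2 y) = fun _ : Pt => (0:ℝ) := by
      funext y; simp [Γexp]
    rw [hfun, pd_const]
    simp [DΓ]
  · show pd i (fun y => Γexp α 0 3 3 y) x = DΓ α x i 0 3 3
    have hfun : (fun y => Γexp α 0 3 3 y) = fun y : Pt => -2 * y 0 * Fz α y / α ^ 2 := by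
      funext y; simp [Γexp]
    rw [hfun, pd_c1 α hα x]
    fin_cases i <;> simp [DΓ]
  · show pd i (fun y => Γexp α 1 0 0 y) x = DΓ α x i 1 0 0
    have hfun : (fun y => Γexp α 1 0 0 y) = fun _ : Pt => (0:ℝ) := by
      funext y; simp [Γexp]
    rw [hfun, pd_const]
    simp [DΓ]
  · show pd i (fun y => Γexp α 1 0 1 y) x = DΓ α x i 1 0 1
    have hfun : (fun y => Γexp α 1 0 1 y) = fun _ : Pt => (0:ℝ) := by
      funext y; simp [Γexp]
    rw [hfun, pd_const]
    simp [DΓ]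
  · show pd i (fun y => Γexp α 1 0 2 y) x = DΓ α x i 1 0 2
    have hfun : (fun y => Γexp α 1 0 2 y) = fun _ : Pt => (0:ℝ) := by
      funext y; simp [Γexp]
    rw [hfun, pd_const]
    simp [DΓ]
  · show pd i (fun y => Γexp α 1 0 3 y) x = DΓ α x i 1 0 3
    have hfun : (fun y => Γexp α 1 0 3 y) = fun _ : Pt => (0:ℝ) := by
      funext y; simp [Γexp]
    rw [hfun, pd_const]
    simp [DΓ]
  · show pd i (fun y => Γexp α 1 1 0 y) x = DΓ α x i 1 1 0
    have hfun : (fun y => Γexp α 1 1 0 y) = fun _ : Pt => (0:ℝ) := by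
      funext y; simp [Γexp]
    rw [hfun, pd_const]
    simp [DΓ]
  · show pd i (fun y => Γexp α 1 1 1 y) x = DΓ α x i 1 1 1
    have hfun : (fun y => Γexp α 1 1 1 y) = fun _ : Pt => (0:ℝ) := by
      funext y; simp [Γexp]
    rw [hfun, pd_const]
    simp [DΓ]
  · show pd i (fun y => Γexp α 1 1 2 y) x = DΓ α x i 1 1 2
    have hfun : (fun y => Γexp α 1 1 2 y) = fun _ : Pt => (0:ℝ) := by
      funext y; simp [Γexp]
    rw [hfun, pd_const]
    simp [DΓ]
  · show pd i (fun y => Γexp α 1 1 3 y) x = DΓ α x i 1 1 3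
    have hfun : (fun y => Γexp α 1 1 3 y) = fun _ : Pt => (0:ℝ) := by
      funext y; simp [Γexp]
    rw [hfun, pd_const]
    simp [DΓ]
  · show pd i (fun y => Γexp α 1 2 0 y) x = DΓ α x i 1 2 0
    have hfun : (fun y => Γexp α 1 2 0 y) = fun _ : Pt => (0:ℝ) := by
      funext y; simp [Γexp]
    rw [hfun, pd_const]
    simp [DΓ]
  · show pd i (fun y => Γexp α 1 2 1 y) x = DΓ α x i 1 2 1
    have hfun : (fun y => Γexp α 1 2 1 y) = fun _ : Pt => (0:ℝ) := by
      funext y; simp [Γexp]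
    rw [hfun, pd_const]
    simp [DΓ]
  · show pd i (fun y => Γexp α 1 2 2 y) x = DΓ α x i 1 2 2
    have hfun : (fun y => Γexp α 1 2 2 y) = fun y : Pt => -(y 1) := by
      funext y; simp [Γexp]
    rw [hfun, pd_c3 x]
    fin_cases i <;> simp [DΓ]
  · show pd i (fun y => Γexp α 1 2 3 y) x = DΓ α x i 1 2 3
    have hfun : (fun y => Γexp α 1 2 3 y) = fun _ : Pt => (0:ℝ) := by
      funext y; simp [Γexp]
    rw [hfun, pd_const]
    simp [DΓ]
  · show pd i (fun y => Γexp α 1 3 0 y) x = DΓ α x i 1 3 0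
    have hfun : (fun y => Γexp α 1 3 0 y) = fun _ : Pt => (0:ℝ) := by
      funext y; simp [Γexp]
    rw [hfun, pd_const]
    simp [DΓ]
  · show pd i (fun y => Γexp α 1 3 1 y) x = DΓ α x i 1 3 1
    have hfun : (fun y => Γexp α 1 3 1 y) = fun _ : Pt => (0:ℝ) := by
      funext y; simp [Γexp]
    rw [hfun, pd_const]
    simp [DΓ]
  · show pd i (fun y => Γexp α 1 3 2 y) x = DΓ α x i 1 3 2
    have hfun : (fun y => Γexp α 1 3 2 y) = fun _ : Pt => (0:ℝ) := by
      funext y; simp [Γexp]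
    rw [hfun, pd_const]
    simp [DΓ]
  · show pd i (fun y => Γexp α 1 3 3 y) x = DΓ α x i 1 3 3
    have hfun : (fun y => Γexp α 1 3 3 y) = fun y : Pt => 2 * y 1 * Fz α y / α ^ 2 := by
      funext y; simp [Γexp]
    rw [hfun, pd_c2 α hα x]
    fin_cases i <;> simp [DΓ]
  · show pd i (fun y => Γexp α 2 0 0 y) x = DΓ α x i 2 0 0
    have hfun : (fun y => Γexp α 2 0 0 y) = fun _ : Pt => (0:ℝ) := by
      funext y; simp [Γexp]
    rw [hfun, pd_const]
    simp [DΓ]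
  · show pd i (fun y => Γexp α 2 0 1 y) x = DΓ α x i 2 0 1
    have hfun : (fun y => Γexp α 2 0 1 y) = fun _ : Pt => (0:ℝ) := by
      funext y; simp [Γexp]
    rw [hfun, pd_const]
    simp [DΓ]
  · show pd i (fun y => Γexp α 2 0 2 y) x = DΓ α x i 2 0 2
    have hfun : (fun y => Γexp α 2 0 2 y) = fun _ : Pt => (0:ℝ) := by
      funext y; simp [Γexp]
    rw [hfun, pd_const]
    simp [DΓ]
  · show pd i (fun y => Γexp α 2 0 3 y) x = DΓ α x i 2 0 3
    have hfun : (fun y => Γexp α 2 0 3 y) = fun _ : Pt => (0:ℝ) := by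
      funext y; simp [Γexp]
    rw [hfun, pd_const]
    simp [DΓ]
  · show pd i (fun y => Γexp α 2 1 0 y) x = DΓ α x i 2 1 0
    have hfun : (fun y => Γexp α 2 1 0 y) = fun _ : Pt => (0:ℝ) := by
      funext y; simp [Γexp]
    rw [hfun, pd_const]
    simp [DΓ]
  · show pd i (fun y => Γexp α 2 1 1 y) x = DΓ α x i 2 1 1
    have hfun : (fun y => Γexp α 2 1 1 y) = fun _ : Pt => (0:ℝ) := by
      funext y; simp [Γexp]
    rw [hfun, pd_const]
    simp [DΓ]
  · show pd i (fun y => Γexp α 2 1 2 y) x = DΓ α x i 2 1 2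
    have hfun : (fun y => Γexp α 2 1 2 y) = fun y : Pt => (y 1)⁻¹ := by
      funext y; simp [Γexp]
    rw [hfun, pd_c4 x hr]
    fin_cases i <;> simp [DΓ]
  · show pd i (fun y => Γexp α 2 1 3 y) x = DΓ α x i 2 1 3
    have hfun : (fun y => Γexp α 2 1 3 y) = fun _ : Pt => (0:ℝ) := by
      funext y; simp [Γexp]
    rw [hfun, pd_const]
    simp [DΓ]
  · show pd i (fun y => Γexp α 2 2 0 y) x = DΓ α x i 2 2 0
    have hfun : (fun y => Γexp α 2 2 0 y) = fun _ : Pt => (0:ℝ) := by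
      funext y; simp [Γexp]
    rw [hfun, pd_const]
    simp [DΓ]
  · show pd i (fun y => Γexp α 2 2 1 y) x = DΓ α x i 2 2 1
    have hfun : (fun y => Γexp α 2 2 1 y) = fun y : Pt => (y 1)⁻¹ := by
      funext y; simp [Γexp]
    rw [hfun, pd_c4 x hr]
    fin_cases i <;> simp [DΓ]
  · show pd i (fun y => Γexp α 2 2 2 y) x = DΓ α x i 2 2 2
    have hfun : (fun y => Γexp α 2 2 2 y) = fun _ : Pt => (0:ℝ) := by
      funext y; simp [Γexp]
    rw [hfun, pd_const]
    simp [DΓ]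
  · show pd i (fun y => Γexp α 2 2 3 y) x = DΓ α x i 2 2 3
    have hfun : (fun y => Γexp α 2 2 3 y) = fun _ : Pt => (0:ℝ) := by
      funext y; simp [Γexp]
    rw [hfun, pd_const]
    simp [DΓ]
  · show pd i (fun y => Γexp α 2 3 0 y) x = DΓ α x i 2 3 0
    have hfun : (fun y => Γexp α 2 3 0 y) = fun _ : Pt => (0:ℝ) := by
      funext y; simp [Γexp]
    rw [hfun, pd_const]
    simp [DΓ]
  · show pd i (fun y => Γexp α 2 3 1 y) x = DΓ α x i 2 3 1
    have hfun : (fun y => Γexp α 2 3 1 y) = fun _ : Pt => (0:ℝ) := by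
      funext y; simp [Γexp]
    rw [hfun, pd_const]
    simp [DΓ]
  · show pd i (fun y => Γexp α 2 3 2 y) x = DΓ α x i 2 3 2
    have hfun : (fun y => Γexp α 2 3 2 y) = fun _ : Pt => (0:ℝ) := by
      funext y; simp [Γexp]
    rw [hfun, pd_const]
    simp [DΓ]
  · show pd i (fun y => Γexp α 2 3 3 y) x = DΓ α x i 2 3 3
    have hfun : (fun y => Γexp α 2 3 3 y) = fun _ : Pt => (0:ℝ) := by
      funext y; simp [Γexp]
    rw [hfun, pd_const]
    simp [DΓ]
  · show pd i (fun y => Γexp α 3 0 0 y) x = DΓ α x i 3 0 0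
    have hfun : (fun y => Γexp α 3 0 0 y) = fun _ : Pt => (0:ℝ) := by
      funext y; simp [Γexp]
    rw [hfun, pd_const]
    simp [DΓ]
  · show pd i (fun y => Γexp α 3 0 1 y) x = DΓ α x i 3 0 1
    have hfun : (fun y => Γexp α 3 0 1 y) = fun _ : Pt => (0:ℝ) := by
      funext y; simp [Γexp]
    rw [hfun, pd_const]
    simp [DΓ]
  · show pd i (fun y => Γexp α 3 0 2 y) x = DΓ α x i 3 0 2
    have hfun : (fun y => Γexp α 3 0 2 y) = fun _ : Pt => (0:ℝ) := by
      funext y; simp [Γexp]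
    rw [hfun, pd_const]
    simp [DΓ]
  · show pd i (fun y => Γexp α 3 0 3 y) x = DΓ α x i 3 0 3
    have hfun : (fun y => Γexp α 3 0 3 y) = fun y : Pt => -2 * y 0 / (α ^ 2 * Fz α y) := by
      funext y; simp [Γexp]
    rw [hfun, pd_c5 α hα x hF]
    fin_cases i <;> simp [DΓ]
  · show pd i (fun y => Γexp α 3 1 0 y) x = DΓ α x i 3 1 0
    have hfun : (fun y => Γexp α 3 1 0 y) = fun _ : Pt => (0:ℝ) := by
      funext y; simp [Γexp]
    rw [hfun, pd_const]
    simp [DΓ]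
  · show pd i (fun y => Γexp α 3 1 1 y) x = DΓ α x i 3 1 1
    have hfun : (fun y => Γexp α 3 1 1 y) = fun _ : Pt => (0:ℝ) := by
      funext y; simp [Γexp]
    rw [hfun, pd_const]
    simp [DΓ]
  · show pd i (fun y => Γexp α 3 1 2 y) x = DΓ α x i 3 1 2
    have hfun : (fun y => Γexp α 3 1 2 y) = fun _ : Pt => (0:ℝ) := by
      funext y; simp [Γexp]
    rw [hfun, pd_const]
    simp [DΓ]
  · show pd i (fun y => Γexp α 3 1 3 y) x = DΓ α x i 3 1 3
    have hfun : (fun y => Γexp α 3 1 3 y) = fun y : Pt => -2 * y 1 / (α ^ 2 * Fz α y) := by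
      funext y; simp [Γexp]
    rw [hfun, pd_c6 α hα x hF]
    fin_cases i <;> simp [DΓ]
  · show pd i (fun y => Γexp α 3 2 0 y) x = DΓ α x i 3 2 0
    have hfun : (fun y => Γexp α 3 2 0 y) = fun _ : Pt => (0:ℝ) := by
      funext y; simp [Γexp]
    rw [hfun, pd_const]
    simp [DΓ]
  · show pd i (fun y => Γexp α 3 2 1 y) x = DΓ α x i 3 2 1
    have hfun : (fun y => Γexp α 3 2 1 y) = fun _ : Pt => (0:ℝ) := by
      funext y; simp [Γexp]
    rw [hfun, pd_const]
    simp [DΓ]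
  · show pd i (fun y => Γexp α 3 2 2 y) x = DΓ α x i 3 2 2
    have hfun : (fun y => Γexp α 3 2 2 y) = fun _ : Pt => (0:ℝ) := by
      funext y; simp [Γexp]
    rw [hfun, pd_const]
    simp [DΓ]
  · show pd i (fun y => Γexp α 3 2 3 y) x = DΓ α x i 3 2 3
    have hfun : (fun y => Γexp α 3 2 3 y) = fun _ : Pt => (0:ℝ) := by
      funext y; simp [Γexp]
    rw [hfun, pd_const]
    simp [DΓ]
  · show pd i (fun y => Γexp α 3 3 0 y) x = DΓ α x i 3 3 0
    have hfun : (fun y => Γexp α 3 3 0 y) = fun y : Pt => -2 * y 0 / (α ^ 2 * Fz α y) := by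
      funext y; simp [Γexp]
    rw [hfun, pd_c5 α hα x hF]
    fin_cases i <;> simp [DΓ]
  · show pd i (fun y => Γexp α 3 3 1 y) x = DΓ α x i 3 3 1
    have hfun : (fun y => Γexp α 3 3 1 y) = fun y : Pt => -2 * y 1 / (α ^ 2 * Fz α y) := by
      funext y; simp [Γexp]
    rw [hfun, pd_c6 α hα x hF]
    fin_cases i <;> simp [DΓ]
  · show pd i (fun y => Γexp α 3 3 2 y) x = DΓ α x i 3 3 2
    have hfun : (fun y => Γexp α 3 3 2 y) = fun _ : Pt => (0:ℝ) := by
      funext y; simp [Γexp]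
    rw [hfun, pd_const]
    simp [DΓ]
  · show pd i (fun y => Γexp α 3 3 3 y) x = DΓ α x i 3 3 3
    have hfun : (fun y => Γexp α 3 3 3 y) = fun _ : Pt => (0:ℝ) := by
      funext y; simp [Γexp]
    rw [hfun, pd_const]
    simp [DΓ]

/-! ### Ricci tensor and scalar curvature -/

set_option maxHeartbeats 2000000 in
theorem ricci_eq (α : ℝ) (hα : α ≠ 0) {x : Pt} (hx : x ∈ U α) (b d : Fin 4) :
    ricci (gSzekeres α) x b d
      = Matrix.diagonal ![2 / (α ^ 2 * Fz α x), 2 / (α ^ 2 * Fz α x),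
          2 * (x 1) ^ 2 / (α ^ 2 * Fz α x), 2 * Fz α x / α ^ 2] b d := by
  have hr : x 1 ≠ 0 := ne_of_gt hx.2
  have hF : Fz α x ≠ 0 := ne_of_gt (Fz_pos hα hx)
  have ha2 : (α:ℝ) ^ 2 ≠ 0 := pow_ne_zero 2 hα
  unfold ricci riemann
  simp only [pd_christoffel α hα hx, christoffel_eq α hα hr hF, Fin.sum_univ_four]
  fin_cases b <;> fin_cases d <;>
    · simp [DΓ, Γexp, Matrix.diagonal]
      try field_simp
      try ring

theorem scalar_eq (α : ℝ) (hα : α ≠ 0) {x : Pt} (hx : x ∈ U α) :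
    scalarCurv (gSzekeres α) x = 4 / (α ^ 2 * Fz α x) := by
  have hr : x 1 ≠ 0 := ne_of_gt hx.2
  have hF : Fz α x ≠ 0 := ne_of_gt (Fz_pos hα hx)
  have ha2 : (α:ℝ) ^ 2 ≠ 0 := pow_ne_zero 2 hα
  unfold scalarCurv
  simp only [ricci_eq α hα hx, ginv_eq α hr hF, Fin.sum_univ_four]
  simp [Matrix.diagonal]
  field_simp
  ring

/-- The metric `g = -dt² + dr² + (1 - (t²+r²)/α²)² dz² + r² dφ²` has Einstein
tensor of dust form: `G_{ab} = ρ u_a u_b` with `u = ∂_t` and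
`ρ = 4/(α²(1 - (t²+r²)/α²))`, on the region `t² + r² < α²` (with `r > 0` for
validity of cylindrical coordinates). -/
theorem szekeres_is_dust_solution (α : ℝ) (hα : α ≠ 0) :
    ∀ x : Pt, (x 0) ^ 2 + (x 1) ^ 2 < α ^ 2 → 0 < x 1 →
      einstein (gSzekeres α) x =
        (4 / (α ^ 2 * (1 - ((x 0) ^ 2 + (x 1) ^ 2) / α ^ 2))) •
          Matrix.vecMulVec uCov uCov := by
  intro x h1 h2
  have hx : x ∈ U α := ⟨h1, h2⟩
  have hr : x 1 ≠ 0 := ne_of_gt h2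
  have hF : Fz α x ≠ 0 := ne_of_gt (Fz_pos hα hx)
  have ha2 : (α:ℝ) ^ 2 ≠ 0 := pow_ne_zero 2 hα
  have hFz : (1 - ((x 0) ^ 2 + (x 1) ^ 2) / α ^ 2) = Fz α x := rfl
  ext a b
  rw [einstein, Matrix.of_apply, ricci_eq α hα hx, scalar_eq α hα hx]
  rw [hFz]
  fin_cases a <;> fin_cases b <;>
    · simp [Matrix.diagonal, Matrix.vecMulVec_apply, uCov, gSzekeres, hFz]
      try field_simp
      try ring


end SzekeresDust

end
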